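/- Let N be a positive integer and Δ a natural number. The set { δ : Fin N → ℤ | ∑_{n=0}^{N−1} |δ(n)| ≤ Δ } (the L1 ball of radius Δ in ℤ^N) is finite and its cardinality is at most C(N + Δ − 1, Δ) · (1 + 2·Δ/N)^N, where C denotes the binomial coefficient and the right-hand side is taken as a real number. -/

import Mathlib

open Finset

lemma amgm_aux (N : ℕ) (hN : 0 < N) (Δ : ℕ) (m : Fin N → ℕ) (hm : ∑ n, m n = Δ) :
    (∏ n, (2 * (m n : ℝ) + 1)) ≤ (1 + 2 * (Δ : ℝ) / N) ^ N := by
  have hNR : (0:ℝ) < N := by exact_mod_cast hN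
  set z : Fin N → ℝ := fun n => 2 * (m n : ℝ) + 1 with hz
  have hznn : ∀ i ∈ Finset.univ, (0:ℝ) ≤ z i := fun i _ => by positivity
  have key := Real.geom_mean_le_arith_mean_weighted Finset.univ (fun _ => 1 / N) z
    (fun i _ => by positivity)
    (by simp [Finset.sum_const, Finset.card_univ]; field_simp) hznn
  have hprod : ∏ i, z i ^ ((1:ℝ) / N) = (∏ i, z i) ^ ((1:ℝ) / N) :=
    Real.finset_prod_rpow _ _ hznn _
  have hsum : ∑ i : Fin N, (1 / (N:ℝ)) * z i = 1 + 2 * (Δ : ℝ) / N := by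
    rw [← Finset.mul_sum]
    have : ∑ i, z i = 2 * (Δ:ℝ) + N := by
      simp only [hz, Finset.sum_add_distrib, ← Finset.mul_sum]
      push_cast [← hm]
      simp [Finset.card_univ, mul_comm]
    rw [this]; field_simp; ring
  rw [hprod, hsum] at key
  have hP : (0:ℝ) ≤ ∏ i, z i := Finset.prod_nonneg hznn
  have hR : (0:ℝ) ≤ 1 + 2 * (Δ : ℝ) / N := le_trans (Real.rpow_nonneg hP _) key
  calc ∏ i, z i = ((∏ i, z i) ^ ((1:ℝ)/N)) ^ (N:ℕ) := by
        rw [← Real.rpow_natCast ((∏ i, z i) ^ ((1:ℝ)/N)) N, ← Real.rpow_mul hP]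
        rw [one_div, inv_mul_cancel₀ (ne_of_gt hNR), Real.rpow_one]
    _ ≤ (1 + 2 * (Δ : ℝ) / N) ^ (N:ℕ) := pow_le_pow_left₀ (Real.rpow_nonneg hP _) key N

lemma multiset_card_sum {α ι : Type*} (s : Finset ι) (f : ι → Multiset α) :
    Multiset.card (∑ i ∈ s, f i) = ∑ i ∈ s, Multiset.card (f i) := by
  classical
  induction s using Finset.induction with
  | empty => simp
  | insert a s h ih => simp [Finset.sum_insert h, ih]

lemma card_tuples_aux (N : ℕ) (hN : 0 < N) (Δ : ℕ) :
    (Finset.Nat.antidiagonalTuple N Δ).card ≤ (N + Δ - 1).choose Δ := by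
  classical
  have hi0 : Nonempty (Fin N) := ⟨⟨0, hN⟩⟩
  set f : (Fin N → ℕ) → Sym (Fin N) Δ := fun m =>
    if h : ∑ n, m n = Δ then
      ⟨∑ n, Multiset.replicate (m n) n, by
        rw [multiset_card_sum]; simpa using h⟩
    else Sym.replicate Δ (Classical.arbitrary (Fin N)) with hf
  have : (Finset.Nat.antidiagonalTuple N Δ).card ≤ Fintype.card (Sym (Fin N) Δ) := by
    apply Finset.card_le_card_of_injOn f
    · intro m _; exact Finset.mem_univ _
    · intro a ha b hb hab
      have hsa := Finset.Nat.mem_antidiagonalTuple.1 ha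
      have hsb := Finset.Nat.mem_antidiagonalTuple.1 hb
      rw [hf] at hab
      simp only [dif_pos hsa, dif_pos hsb] at hab
      funext i
      have := congrArg (fun s : Sym (Fin N) Δ => Multiset.count i s.1) hab
      simpa [hsa, hsb, Multiset.count_sum', Multiset.count_replicate] using this
  calc (Finset.Nat.antidiagonalTuple N Δ).card ≤ Fintype.card (Sym (Fin N) Δ) := this
    _ = (N + Δ - 1).choose Δ := by
        rw [Sym.card_sym_eq_choose, Fintype.card_fin]

theorem stmt_9 (N : ℕ) (hN : 0 < N) (Δ : ℕ) :
    {δ : Fin N → ℤ | ∑ n, |δ n| ≤ (Δ : ℤ)}.Finite ∧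
      ({δ : Fin N → ℤ | ∑ n, |δ n| ≤ (Δ : ℤ)}.ncard : ℝ) ≤
        ((N + Δ - 1).choose Δ : ℝ) * (1 + 2 * (Δ : ℝ) / N) ^ N := by
  classical
  set T := Finset.Nat.antidiagonalTuple N Δ with hT
  set box : (Fin N → ℕ) → Finset (Fin N → ℤ) :=
    fun m => Fintype.piFinset fun n => Finset.Icc (-(m n : ℤ)) (m n) with hbox
  have hsub : {δ : Fin N → ℤ | ∑ n, |δ n| ≤ (Δ : ℤ)} ⊆ ↑(T.biUnion box) := by
    intro δ hδ
    simp only [Set.mem_setOf_eq] at hδ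
    have hna : ∑ n, (δ n).natAbs ≤ Δ := by
      have : ((∑ n, (δ n).natAbs : ℕ) : ℤ) ≤ (Δ : ℤ) := by push_cast; simpa using hδ
      exact_mod_cast this
    set i0 : Fin N := ⟨0, hN⟩
    set m : Fin N → ℕ := fun n =>
      (δ n).natAbs + if n = i0 then Δ - ∑ k, (δ k).natAbs else 0 with hm
    have hmsum : ∑ n, m n = Δ := by
      simp only [hm, Finset.sum_add_distrib, Finset.sum_ite_eq' Finset.univ i0,
        Finset.mem_univ, if_true]
      omega
    simp only [Finset.coe_biUnion, Set.mem_iUnion, Finset.mem_coe]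
    refine ⟨m, ?_, ?_⟩
    · rw [hT]; exact Finset.Nat.mem_antidiagonalTuple.2 hmsum
    · simp only [hbox, Fintype.mem_piFinset, Finset.mem_Icc]
      intro n
      have h1 : |δ n| ≤ (m n : ℤ) := by
        rw [hm]; push_cast
        rw [Int.abs_eq_natAbs]
        split <;> push_cast <;> omega
      constructor
      · linarith [neg_abs_le (δ n)]
      · linarith [le_abs_self (δ n)]
  have hfin : {δ : Fin N → ℤ | ∑ n, |δ n| ≤ (Δ : ℤ)}.Finite :=
    Set.Finite.subset (T.biUnion box).finite_toSet hsub
  refine ⟨hfin, ?_⟩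
  have hcard1 : {δ : Fin N → ℤ | ∑ n, |δ n| ≤ (Δ : ℤ)}.ncard ≤ (T.biUnion box).card := by
    rw [← Set.ncard_coe_finset]
    exact Set.ncard_le_ncard hsub (T.biUnion box).finite_toSet
  have hboxcard : ∀ m : Fin N → ℕ, ((box m).card : ℝ) = ∏ n, (2 * (m n : ℝ) + 1) := by
    intro m
    rw [hbox]
    simp only [Fintype.card_piFinset, Int.card_Icc]
    push_cast
    apply Finset.prod_congr rfl
    intro n _
    have : ((m n : ℤ) + 1 - -(m n : ℤ)) = 2 * (m n : ℤ) + 1 := by ring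
    rw [this]
    have h2 : (0:ℤ) ≤ 2 * (m n : ℤ) + 1 := by positivity
    have h3 : (((2 * (m n : ℤ) + 1).toNat : ℕ) : ℝ) = ((2 * (m n : ℤ) + 1 : ℤ) : ℝ) := by
      exact_mod_cast congrArg (fun x : ℤ => (x : ℝ)) (Int.toNat_of_nonneg h2)
    rw [h3]; push_cast; ring
  have hcard2 : ((T.biUnion box).card : ℝ) ≤ (T.card : ℝ) * (1 + 2 * (Δ : ℝ) / N) ^ N := by
    calc ((T.biUnion box).card : ℝ) ≤ ((∑ m ∈ T, (box m).card : ℕ) : ℝ) := by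
          exact_mod_cast Finset.card_biUnion_le
      _ = ∑ m ∈ T, ((box m).card : ℝ) := by push_cast; ring
      _ ≤ ∑ m ∈ T, (1 + 2 * (Δ : ℝ) / N) ^ N := by
          apply Finset.sum_le_sum
          intro m hm
          rw [hboxcard m]
          exact amgm_aux N hN Δ m (Finset.Nat.mem_antidiagonalTuple.1 hm)
      _ = (T.card : ℝ) * (1 + 2 * (Δ : ℝ) / N) ^ N := by
          rw [Finset.sum_const, nsmul_eq_mul]
  have hRnn : (0:ℝ) ≤ (1 + 2 * (Δ : ℝ) / N) ^ N := by positivity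
  calc ({δ : Fin N → ℤ | ∑ n, |δ n| ≤ (Δ : ℤ)}.ncard : ℝ) ≤ ((T.biUnion box).card : ℝ) := by
        exact_mod_cast hcard1
    _ ≤ (T.card : ℝ) * (1 + 2 * (Δ : ℝ) / N) ^ N := hcard2
    _ ≤ ((N + Δ - 1).choose Δ : ℝ) * (1 + 2 * (Δ : ℝ) / N) ^ N := by
        apply mul_le_mul_of_nonneg_right _ hRnn
        exact_mod_cast card_tuples_aux N hN Δ
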